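/- arXiv:2511.16959 — 2 statements merged into one kernel-verified Lean document; each statement's English description precedes it below -/
import Mathlib

section
/- For n ≥ 7 and 2 < m < n with n - m ≥ 5, the group ⟨r_n, r_m, r_2⟩ does not act transitively on {1,...,n}; in particular it is a proper subgroup of Sym_n. The orbit of 1 is contained in the set of integers congruent to one of 1, 2, m, m-1 modulo n-m. -/
/-- The prefix reversal `r i` on positions `1..n` (0-indexed as `Fin n`):
position `x+1 ↦ i+1-(x+1)` for `x+1 ≤ i`, i.e. `x ↦ i-1-x` for `x < i`, fixing the rest. -/
def pr (n i : ℕ) : Equiv.Perm (Fin n) :=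
  Function.Involutive.toPerm
    (fun x => if h : x.val < i ∧ i ≤ n then ⟨i - 1 - x.val, by omega⟩ else x)
    (by
      intro x
      apply Fin.ext
      dsimp only
      split_ifs with h1 h2 h3 <;> simp_all <;> omega)

lemma pr_apply (n i : ℕ) (x : Fin n) :
    ((pr n i) x).val = if x.val < i ∧ i ≤ n then i - 1 - x.val else x.val := by
  show ((if h : x.val < i ∧ i ≤ n then (⟨i - 1 - x.val, by omega⟩ : Fin n) else x)).val = _
  split_ifs <;> rfl

lemma pr_invol (n i : ℕ) (x : Fin n) : pr n i (pr n i x) = x := by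
  have h := Function.Involutive.toPerm_symm (f := fun x : Fin n =>
    if h : x.val < i ∧ i ≤ n then (⟨i - 1 - x.val, by omega⟩ : Fin n) else x)
  have hinv : (pr n i)⁻¹ = pr n i := by
    show (pr n i).symm = pr n i
    exact h _
  calc pr n i (pr n i x) = (pr n i)⁻¹ (pr n i x) := by rw [hinv]
    _ = x := Equiv.symm_apply_apply _ _

lemma exists_bad (k m : ℕ) (hk : 5 ≤ k) (hm : 3 ≤ m) :
    ∃ v, 3 ≤ v ∧ v ≤ 5 ∧ v % k ≠ 1 % k ∧ v % k ≠ 2 % k ∧ v % k ≠ m % k ∧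
      v % k ≠ (m - 1) % k := by
  set a := m % k with ha
  set b := (m - 1) % k with hb
  have ha' : a < k := Nat.mod_lt _ (by omega)
  have hb' : b < k := Nat.mod_lt _ (by omega)
  have hab : a = (b + 1) % k := by
    conv_rhs => rw [Nat.add_mod, Nat.mod_eq_of_lt hb', hb, ← Nat.add_mod]
    rw [ha]
    congr 1
    omega
  by_cases hk5 : k = 5
  · subst hk5
    interval_cases b <;>
      first
        | exact ⟨3, by omega⟩
        | exact ⟨4, by omega⟩
        | exact ⟨5, by omega⟩
  · have hk6 : 6 ≤ k := by omega
    have hcase : (b + 1 = k ∧ a = 0) ∨ a = b + 1 := by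
      rcases Nat.lt_or_ge (b+1) k with h | h
      · right; rw [hab, Nat.mod_eq_of_lt h]
      · left
        have hbk : b + 1 = k := by omega
        exact ⟨hbk, by rw [hab, hbk, Nat.mod_self]⟩
    have h1 : (1:ℕ) % k = 1 := Nat.mod_eq_of_lt (by omega)
    have h2 : (2:ℕ) % k = 2 := Nat.mod_eq_of_lt (by omega)
    have h3 : (3:ℕ) % k = 3 := Nat.mod_eq_of_lt (by omega)
    have h4 : (4:ℕ) % k = 4 := Nat.mod_eq_of_lt (by omega)
    have h5 : (5:ℕ) % k = 5 := Nat.mod_eq_of_lt (by omega)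
    refine ⟨if b = 2 then 4 else if b = 3 then 5 else 3, ?_, ?_, ?_, ?_, ?_, ?_⟩ <;>
      split_ifs <;> (try simp only [h1, h2, h3, h4, h5]) <;> omega

theorem stmt9 (n m : ℕ) (hn : 7 ≤ n) (hm1 : 2 < m) (hm2 : m < n) (hgap : 5 ≤ n - m) :
    (∀ g ∈ Subgroup.closure ({pr n n, pr n m, pr n 2} : Set (Equiv.Perm (Fin n))),
      ((g (⟨0, by omega⟩ : Fin n)).val + 1) % (n - m) = 1 % (n - m) ∨
      ((g (⟨0, by omega⟩ : Fin n)).val + 1) % (n - m) = 2 % (n - m) ∨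
      ((g (⟨0, by omega⟩ : Fin n)).val + 1) % (n - m) = m % (n - m) ∨
      ((g (⟨0, by omega⟩ : Fin n)).val + 1) % (n - m) = (m - 1) % (n - m)) ∧
    ¬ (∀ x y : Fin n, ∃ g ∈ Subgroup.closure
        ({pr n n, pr n m, pr n 2} : Set (Equiv.Perm (Fin n))), g x = y) ∧
    Subgroup.closure ({pr n n, pr n m, pr n 2} : Set (Equiv.Perm (Fin n))) ≠ ⊤ := by
  set k := n - m with hk
  set S : Set (Equiv.Perm (Fin n)) := {pr n n, pr n m, pr n 2} with hS
  have hmk : ((n : ℕ) : ZMod k) = ((m : ℕ) : ZMod k) := by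
    have hnm : n = m + k := by omega
    rw [hnm]
    push_cast [ZMod.natCast_self]
    ring
  set P : Fin n → Prop := fun x =>
    ((x.val + 1 : ℕ) : ZMod k) = 1 ∨ ((x.val + 1 : ℕ) : ZMod k) = 2 ∨
    ((x.val + 1 : ℕ) : ZMod k) = (m : ZMod k) ∨
    ((x.val + 1 : ℕ) : ZMod k) = (m : ZMod k) - 1 with hP
  have step : ∀ a : ZMod k,
      (a + 1 = 1 ∨ a + 1 = 2 ∨ a + 1 = (m : ZMod k) ∨ a + 1 = (m : ZMod k) - 1) →
      ((m : ZMod k) - a = 1 ∨ (m : ZMod k) - a = 2 ∨ (m : ZMod k) - a = (m : ZMod k) ∨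
        (m : ZMod k) - a = (m : ZMod k) - 1) := by
    intro a h
    rcases h with h | h | h | h
    · right; right; left; linear_combination -h
    · right; right; right; linear_combination -h
    · left; linear_combination -h
    · right; left; linear_combination -h
  have gen : ∀ g ∈ S, ∀ x : Fin n, P x → P (g x) := by
    intro g hg x hx
    have hx' : ((x.val : ZMod k) + 1 = 1 ∨ (x.val : ZMod k) + 1 = 2 ∨
        (x.val : ZMod k) + 1 = (m : ZMod k) ∨ (x.val : ZMod k) + 1 = (m : ZMod k) - 1) := by
      rw [hP] at hx
      push_cast at hx
      exact hx
    have hstep := step (x.val : ZMod k) hx'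
    rcases hg with rfl | rfl | rfl
    · -- pr n n
      have hv : ((pr n n) x).val = n - 1 - x.val := by
        rw [pr_apply]
        simp [x.isLt]
      simp only [hP]
      have hcast : ((((pr n n) x).val + 1 : ℕ) : ZMod k)
          = (m : ZMod k) - (x.val : ZMod k) := by
        rw [hv, show (n - 1 - x.val) + 1 = n - x.val by omega,
          Nat.cast_sub (le_of_lt x.isLt), hmk]
      rw [hcast]
      exact hstep
    · -- pr n m
      by_cases hxm : x.val < m
      · have hv : ((pr n m) x).val = m - 1 - x.val := by
          rw [pr_apply]
          simp [hxm, le_of_lt hm2]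
        simp only [hP]
        have hcast : ((((pr n m) x).val + 1 : ℕ) : ZMod k)
            = (m : ZMod k) - (x.val : ZMod k) := by
          rw [hv, show (m - 1 - x.val) + 1 = m - x.val by omega,
            Nat.cast_sub (le_of_lt hxm)]
        rw [hcast]
        exact hstep
      · have hv : ((pr n m) x).val = x.val := by
          rw [pr_apply]
          simp [hxm]
        simp only [hP]
        rw [hv]
        exact hx
    · -- pr n 2
      by_cases hx2 : x.val < 2
      · have hv : ((pr n 2) x).val = 1 - x.val := by
          rw [pr_apply]
          simp [hx2, show 2 ≤ n by omega]
        simp only [hP]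
        rw [hv]
        interval_cases hxv : x.val
        · right; left; norm_num
        · left; norm_num
      · have hv : ((pr n 2) x).val = x.val := by
          rw [pr_apply]
          simp [hx2]
        simp only [hP]
        rw [hv]
        exact hx
  have main : ∀ g ∈ Subgroup.closure S, ∀ x : Fin n, P x ↔ P (g x) := by
    intro g hg
    induction hg using Subgroup.closure_induction with
    | mem g hgS =>
      intro x
      constructor
      · exact gen g hgS x
      · intro hgx
        have h2 := gen g hgS (g x) hgx
        have hinv : g (g x) = x := by
          rcases hgS with rfl | rfl | rfl <;> exact pr_invol _ _ _
        rwa [hinv] at h2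
    | one => intro x; simp
    | mul g h hg hh ihg ihh =>
      intro x
      rw [Equiv.Perm.mul_apply]
      exact (ihh x).trans (ihg (h x))
    | inv g hg ih =>
      intro x
      have h2 := ih (g⁻¹ x)
      rw [show g (g⁻¹ x) = x from Equiv.apply_symm_apply g x] at h2
      exact h2.symm
  have h0 : P ⟨0, by omega⟩ := by
    rw [hP]
    left
    norm_num
  have part1 : ∀ g ∈ Subgroup.closure S,
      ((g (⟨0, by omega⟩ : Fin n)).val + 1) % k = 1 % k ∨
      ((g (⟨0, by omega⟩ : Fin n)).val + 1) % k = 2 % k ∨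
      ((g (⟨0, by omega⟩ : Fin n)).val + 1) % k = m % k ∨
      ((g (⟨0, by omega⟩ : Fin n)).val + 1) % k = (m - 1) % k := by
    intro g hg
    have hPg := (main g hg ⟨0, by omega⟩).mp h0
    rw [hP] at hPg
    rcases hPg with h | h | h | h
    · left
      exact (ZMod.natCast_eq_natCast_iff _ _ _).mp (by rw [h]; simp)
    · right; left
      exact (ZMod.natCast_eq_natCast_iff _ _ _).mp (by rw [h]; simp)
    · right; right; left
      exact (ZMod.natCast_eq_natCast_iff _ _ _).mp (by rw [h])
    · right; right; right
      refine (ZMod.natCast_eq_natCast_iff _ _ _).mp ?_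
      rw [h, Nat.cast_sub (by omega : 1 ≤ m)]
      simp
  have part2 : ¬ (∀ x y : Fin n, ∃ g ∈ Subgroup.closure S, g x = y) := by
    intro htrans
    obtain ⟨v, hv3, hv5, hv1, hv2, hvm, hvm1⟩ := exists_bad k m (by omega) (by omega)
    obtain ⟨g, hg, hgx⟩ := htrans ⟨0, by omega⟩ ⟨v - 1, by omega⟩
    have h := part1 g hg
    rw [hgx] at h
    have hval : ((⟨v - 1, by omega⟩ : Fin n)).val + 1 = v := by
      simp
      omega
    rw [hval] at h
    rcases h with h | h | h | h
    · exact hv1 h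
    · exact hv2 h
    · exact hvm h
    · exact hvm1 h
  refine ⟨part1, part2, ?_⟩
  intro htop
  apply part2
  intro x y
  exact ⟨Equiv.swap x y, by rw [htop]; exact Subgroup.mem_top _, Equiv.swap_apply_left x y⟩
end

section
/- Let n ≥ 4, 2 < m < n, m ∈ {n-1, n-2, n-3}. The set {r_n, r_m, r_2} generates Sym_n if and only if one of: (i) n even and m = n-1; (ii) n odd and m ∈ {n-1, n-2} when n ≡ 0 or 2 (mod 3); (iii) n odd and m ∈ {n-1, n-2, n-3} when n ≡ 1 (mod 3). Moreover for m ≤ n-4 (with n ≥ 7), {r_n, r_m, r_2} never generates Sym_n. -/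
set_option maxHeartbeats 1000000

open Equiv Equiv.Perm Subgroup

lemma pr_val {n i : ℕ} (x : Fin n) :
    ((pr n i) x).val = if x.val < i ∧ i ≤ n then i - 1 - x.val else x.val := by
  show ((if h : x.val < i ∧ i ≤ n then (⟨i - 1 - x.val, by omega⟩ : Fin n) else x)).val = _
  split_ifs <;> rfl

lemma pr_two {n : ℕ} (hn : 2 ≤ n) :
    pr n 2 = Equiv.swap ⟨0, by omega⟩ ⟨1, by omega⟩ := by
  ext x
  rw [pr_val, Equiv.swap_apply_def]
  split_ifs with h1 h2 h3 <;> simp_all [Fin.ext_iff] <;> omega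

lemma conj_swap_mem {n : ℕ} {G : Subgroup (Perm (Fin n))} {g : Perm (Fin n)} (hg : g ∈ G)
    {a b a' b' : Fin n} (h : Equiv.swap a b ∈ G) (ha : g a = a') (hb : g b = b') :
    Equiv.swap a' b' ∈ G := by
  subst ha; subst hb
  rw [Equiv.swap_apply_apply]
  exact mul_mem (mul_mem hg h) (inv_mem hg)

lemma swap_trans_mem {n : ℕ} {G : Subgroup (Perm (Fin n))} {a b c : Fin n}
    (h1 : Equiv.swap a b ∈ G) (h2 : Equiv.swap b c ∈ G) : Equiv.swap a c ∈ G := by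
  rcases eq_or_ne a b with rfl | hab
  · exact h2
  rcases eq_or_ne a c with rfl | hac
  · rw [Equiv.swap_self]
    exact one_mem G
  rcases eq_or_ne b c with rfl | hbc
  · exact h1
  exact conj_swap_mem h2 h1 (Equiv.swap_apply_of_ne_of_ne hab hac)
    (Equiv.swap_apply_left b c)

lemma cycleRange_succ_eq {n j : ℕ} (hj : j + 1 < n + 1) :
    Fin.cycleRange (⟨j + 1, hj⟩ : Fin (n + 1)) =
      Fin.cycleRange ⟨j, by omega⟩ * Equiv.swap ⟨j, by omega⟩ ⟨j + 1, hj⟩ := by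
  have hn1 : 1 ≤ n := by omega
  ext x
  simp only [Equiv.Perm.mul_apply]
  rcases lt_trichotomy x.val j with h | h | h
  · have hx1 : Equiv.swap (⟨j, by omega⟩ : Fin (n+1)) ⟨j + 1, hj⟩ x = x :=
      Equiv.swap_apply_of_ne_of_ne (by simp [Fin.ext_iff]; omega) (by simp [Fin.ext_iff]; omega)
    rw [hx1, Fin.cycleRange_of_lt (by simp [Fin.lt_def]; omega),
      Fin.cycleRange_of_lt (by simp [Fin.lt_def]; omega)]
  · have hx : x = ⟨j, by omega⟩ := by simp [Fin.ext_iff, h]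
    rw [hx, Equiv.swap_apply_left, Fin.cycleRange_of_lt (by simp [Fin.lt_def]),
      Fin.cycleRange_of_gt (by simp [Fin.lt_def])]
    rw [Fin.val_add_one_of_lt (by simp [Fin.lt_def, Fin.val_last]; omega)]
  · rcases eq_or_lt_of_le (Nat.succ_le_of_lt h) with h2 | h2
    · have hx : x = ⟨j + 1, hj⟩ := by simp [Fin.ext_iff]; omega
      rw [hx, Equiv.swap_apply_right, Fin.cycleRange_self, Fin.cycleRange_self]
    · have hx1 : Equiv.swap (⟨j, by omega⟩ : Fin (n+1)) ⟨j + 1, hj⟩ x = x :=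
        Equiv.swap_apply_of_ne_of_ne (by simp [Fin.ext_iff]; omega) (by simp [Fin.ext_iff]; omega)
      rw [hx1, Fin.cycleRange_of_gt (by simp [Fin.lt_def]; omega),
        Fin.cycleRange_of_gt (by simp [Fin.lt_def]; omega)]

lemma top_of_adjacent {n : ℕ} (hn : 2 ≤ n) {G : Subgroup (Perm (Fin n))}
    (h : ∀ v : ℕ, (hv : v + 1 < n) → Equiv.swap ⟨v, by omega⟩ ⟨v + 1, hv⟩ ∈ G) : G = ⊤ := by
  obtain ⟨N, rfl⟩ : ∃ N, n = N + 1 := ⟨n - 1, by omega⟩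
  have key : ∀ j : ℕ, (hj : j < N + 1) → Fin.cycleRange (⟨j, hj⟩ : Fin (N + 1)) ∈ G := by
    intro j
    induction j with
    | zero =>
      intro hj
      rw [Fin.cycleRange_mk_zero]
      exact one_mem G
    | succ j ih =>
      intro hj
      rw [cycleRange_succ_eq hj]
      exact mul_mem (ih (by omega)) (h j hj)
  have hrot : finRotate (N + 1) ∈ G := by
    have h1 := key N (by omega)
    have h2 : (⟨N, by omega⟩ : Fin (N + 1)) = Fin.last N := rfl
    rwa [h2, Fin.cycleRange_last] at h1
  have hcyc := Equiv.Perm.closure_cycle_adjacent_swap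
    (isCycle_finRotate_of_le hn) (support_finRotate_of_le hn) (0 : Fin (N + 1))
  rw [eq_top_iff, ← hcyc, Subgroup.closure_le]
  rintro x (rfl | rfl)
  · exact hrot
  · have h01 : finRotate (N + 1) (0 : Fin (N + 1)) = ⟨1, by omega⟩ := by
      apply Fin.ext
      rw [coe_finRotate]
      have : (0 : Fin (N + 1)) ≠ Fin.last N := by
        simp [Fin.ext_iff]; omega
      simp [this]
    have h0 : (0 : Fin (N + 1)) = ⟨0, by omega⟩ := rfl
    rw [h01, h0]
    exact h 0 (by omega)


lemma gen1 {n : ℕ} (hn : 4 ≤ n) :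
    Subgroup.closure ({pr n n, pr n (n-1), pr n 2} : Set (Perm (Fin n))) = ⊤ := by
  set G := Subgroup.closure ({pr n n, pr n (n-1), pr n 2} : Set (Perm (Fin n))) with hG
  have hRn : pr n n ∈ G := Subgroup.subset_closure (by simp)
  have hRm : pr n (n-1) ∈ G := Subgroup.subset_closure (by simp)
  have h2 : pr n 2 ∈ G := Subgroup.subset_closure (by simp)
  obtain ⟨N, rfl⟩ : ∃ N, n = N + 1 := ⟨n - 1, by omega⟩
  have heq : finRotate (N + 1) = pr (N+1) (N+1) * pr (N+1) N := by
    ext x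
    rw [Equiv.Perm.mul_apply, coe_finRotate]
    simp only [pr_val]
    by_cases hx : x = Fin.last N
    · rw [if_pos hx, hx]
      simp only [Fin.val_last]
      split_ifs <;> omega
    · rw [if_neg hx]
      have hlt : x.val < N := by
        have h1 := x.isLt
        have h2 : x.val ≠ N := fun hc => hx (Fin.ext hc)
        omega
      split_ifs <;> omega
  have hrot : finRotate (N + 1) ∈ G := by
    rw [heq]
    exact mul_mem hRn (by simpa using hRm)
  have hcyc := Equiv.Perm.closure_cycle_adjacent_swap
    (isCycle_finRotate_of_le (by omega : 2 ≤ N + 1))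
    (support_finRotate_of_le (by omega)) (0 : Fin (N + 1))
  rw [eq_top_iff, ← hcyc, Subgroup.closure_le]
  rintro x (rfl | rfl)
  · exact hrot
  · have h01 : finRotate (N + 1) (0 : Fin (N + 1)) = ⟨1, by omega⟩ := by
      rw [Fin.ext_iff, coe_finRotate]
      have : (0 : Fin (N + 1)) ≠ Fin.last N := by simp [Fin.ext_iff]; omega
      simp [this]
    rw [h01]
    have h0 : (0 : Fin (N + 1)) = ⟨0, by omega⟩ := rfl
    rw [h0, ← pr_two (by omega)]
    exact h2

lemma gen2 {n : ℕ} (hn : 5 ≤ n) (hodd : n % 2 = 1) :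
    Subgroup.closure ({pr n n, pr n (n-2), pr n 2} : Set (Perm (Fin n))) = ⊤ := by
  set G := Subgroup.closure ({pr n n, pr n (n-2), pr n 2} : Set (Perm (Fin n))) with hG
  have hRn : pr n n ∈ G := Subgroup.subset_closure (by simp)
  have hRm : pr n (n-2) ∈ G := Subgroup.subset_closure (by simp)
  have h2 : pr n 2 ∈ G := Subgroup.subset_closure (by simp)
  have hc : pr n n * pr n (n-2) ∈ G := mul_mem hRn hRm
  -- even swaps
  have evens : ∀ j : ℕ, (h : 2*j+1 < n) → Equiv.swap ⟨2*j, by omega⟩ ⟨2*j+1, h⟩ ∈ G := by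
    intro j
    induction j with
    | zero =>
      intro h
      have := pr_two (n := n) (by omega)
      rw [this] at h2
      convert h2 using 2 <;> simp
    | succ j ih =>
      intro h
      have h' : 2*j+1 < n := by omega
      refine conj_swap_mem hc (ih h') ?_ ?_ <;>
        · simp only [Fin.ext_iff, Equiv.Perm.mul_apply, pr_val, Fin.val_mk]
          split_ifs <;> omega
  have alls : ∀ v : ℕ, (h : v + 1 < n) → Equiv.swap ⟨v, by omega⟩ ⟨v+1, h⟩ ∈ G := by
    intro v h
    rcases Nat.even_or_odd v with ⟨j, hj⟩ | ⟨j, hj⟩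
    · have h' : 2*j+1 < n := by omega
      have := evens j h'
      convert this using 2 <;> simp [Fin.ext_iff] <;> omega
    · -- v odd : conjugate even swap by pr n n
      have h' : 2*((n-2-v)/2)+1 < n := by omega
      rw [Equiv.swap_comm]
      refine conj_swap_mem hRn (evens _ h') ?_ ?_ <;>
        · simp only [Fin.ext_iff, pr_val, Fin.val_mk]
          split_ifs <;> omega
  exact top_of_adjacent (by omega) alls


lemma gen3 {n : ℕ} (hn : 7 ≤ n) (h6 : n % 6 = 1) :
    Subgroup.closure ({pr n n, pr n (n-3), pr n 2} : Set (Perm (Fin n))) = ⊤ := by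
  set G := Subgroup.closure ({pr n n, pr n (n-3), pr n 2} : Set (Perm (Fin n))) with hG
  have hRn : pr n n ∈ G := Subgroup.subset_closure (by simp)
  have hRm : pr n (n-3) ∈ G := Subgroup.subset_closure (by simp)
  have h2 : pr n 2 ∈ G := Subgroup.subset_closure (by simp)
  have hc : pr n n * pr n (n-3) ∈ G := mul_mem hRn hRm
  have sw01 : Equiv.swap (⟨0, by omega⟩ : Fin n) ⟨1, by omega⟩ ∈ G := by
    rw [← pr_two (by omega)]; exact h2
  -- v ≡ 0 mod 3 adjacent swaps
  have s0 : ∀ j : ℕ, (h : 3*j+1 ≤ n-3) →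
      Equiv.swap (⟨3*j, by omega⟩ : Fin n) ⟨3*j+1, by omega⟩ ∈ G := by
    intro j
    induction j with
    | zero =>
      intro h
      convert sw01 using 2 <;> simp
    | succ j ih =>
      intro h
      refine conj_swap_mem hc (ih (by omega)) ?_ ?_ <;>
        · simp only [Fin.ext_iff, Equiv.Perm.mul_apply, pr_val, Fin.val_mk]
          split_ifs <;> omega
  have s0' : ∀ v : ℕ, v % 3 = 0 → (h : v+1 ≤ n-3) →
      Equiv.swap (⟨v, by omega⟩ : Fin n) ⟨v+1, by omega⟩ ∈ G := by
    intro v hv h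
    have := s0 (v/3) (by omega)
    convert this using 2 <;> simp [Fin.ext_iff] <;> omega
  -- v ≡ 2 mod 3 adjacent swaps
  have s2 : ∀ v : ℕ, v % 3 = 2 → (h : v+1 < n) →
      Equiv.swap (⟨v, by omega⟩ : Fin n) ⟨v+1, by omega⟩ ∈ G := by
    intro v hv h
    rw [Equiv.swap_comm]
    refine conj_swap_mem hRn (s0 ((n-2-v)/3) (by omega)) ?_ ?_ <;>
      · simp only [Fin.ext_iff, pr_val, Fin.val_mk]
        split_ifs <;> omega
  -- ladder start
  have e1 : Equiv.swap (⟨n-4, by omega⟩ : Fin n) ⟨n-3, by omega⟩ ∈ G := by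
    have := s0' (n-4) (by omega) (by omega)
    convert this using 2 <;> simp [Fin.ext_iff] <;> omega
  have e2 : Equiv.swap (⟨2, by omega⟩ : Fin n) ⟨n-1, by omega⟩ ∈ G := by
    rw [Equiv.swap_comm]
    refine conj_swap_mem hc e1 ?_ ?_ <;>
      · simp only [Fin.ext_iff, Equiv.Perm.mul_apply, pr_val, Fin.val_mk]
        split_ifs <;> omega
  have e3 : Equiv.swap (⟨0, by omega⟩ : Fin n) ⟨n-3, by omega⟩ ∈ G := by
    rw [Equiv.swap_comm]
    refine conj_swap_mem hRn e2 ?_ ?_ <;>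
      · simp only [Fin.ext_iff, pr_val, Fin.val_mk]
        split_ifs <;> omega
  -- long edges E_j = {3j+2, 3j-3}
  have eE : ∀ j : ℕ, 1 ≤ j → (h : 3*j+2 ≤ n-5) →
      Equiv.swap (⟨3*j+2, by omega⟩ : Fin n) ⟨3*j-3, by omega⟩ ∈ G := by
    intro j
    induction j with
    | zero => intro h; omega
    | succ j ih =>
      intro _ h
      rcases Nat.eq_or_lt_of_le (show 1 ≤ j + 1 by omega) with heq | hlt
      · -- j + 1 = 1 : base case {5, 0}
        have hj0 : j = 0 := by omega
        subst hj0
        refine conj_swap_mem hc e2 ?_ ?_ <;>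
          · simp only [Fin.ext_iff, Equiv.Perm.mul_apply, pr_val, Fin.val_mk]
            split_ifs <;> omega
      · refine conj_swap_mem hc (ih (by omega) (by omega)) ?_ ?_ <;>
          · simp only [Fin.ext_iff, Equiv.Perm.mul_apply, pr_val, Fin.val_mk]
            split_ifs <;> omega
  -- descent
  have desc : ∀ t : ℕ, (ht : 6*t ≤ n-7) →
      Equiv.swap (⟨0, by omega⟩ : Fin n) ⟨n-5-6*t, by omega⟩ ∈ G := by
    intro t
    induction t with
    | zero =>
      intro ht
      have e4 : Equiv.swap (⟨0, by omega⟩ : Fin n) ⟨n-4, by omega⟩ ∈ G :=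
        swap_trans_mem e3 (by rw [Equiv.swap_comm]; exact e1)
      have hs : Equiv.swap (⟨n-4, by omega⟩ : Fin n) ⟨n-5, by omega⟩ ∈ G := by
        rw [Equiv.swap_comm]
        have := s2 (n-5) (by omega) (by omega)
        convert this using 2 <;> simp [Fin.ext_iff] <;> omega
      have e5 := swap_trans_mem e4 hs
      convert e5 using 2 <;> simp [Fin.ext_iff] <;> omega
    | succ t ih =>
      intro ht
      have prev := ih (by omega)
      have hE := eE ((n-7-6*t)/3) (by omega) (by omega)
      have hE' : Equiv.swap (⟨n-5-6*t, by omega⟩ : Fin n) ⟨n-10-6*t, by omega⟩ ∈ G := by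
        convert hE using 2 <;> simp [Fin.ext_iff] <;> omega
      have step1 := swap_trans_mem prev hE'
      have hs : Equiv.swap (⟨n-10-6*t, by omega⟩ : Fin n) ⟨n-11-6*t, by omega⟩ ∈ G := by
        rw [Equiv.swap_comm]
        have := s2 (n-11-6*t) (by omega) (by omega)
        convert this using 2 <;> simp [Fin.ext_iff] <;> omega
      have step2 := swap_trans_mem step1 hs
      convert step2 using 2 <;> simp [Fin.ext_iff] <;> omega
  -- swap {1,2}
  have sw12 : Equiv.swap (⟨1, by omega⟩ : Fin n) ⟨2, by omega⟩ ∈ G := by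
    have h02 : Equiv.swap (⟨0, by omega⟩ : Fin n) ⟨2, by omega⟩ ∈ G := by
      have := desc ((n-7)/6) (by omega)
      convert this using 2 <;> simp [Fin.ext_iff] <;> omega
    exact swap_trans_mem (by rw [Equiv.swap_comm]; exact sw01) h02
  -- v ≡ 1 mod 3 adjacent swaps
  have s1 : ∀ j : ℕ, (h : 3*j+2 ≤ n-3) →
      Equiv.swap (⟨3*j+1, by omega⟩ : Fin n) ⟨3*j+2, by omega⟩ ∈ G := by
    intro j
    induction j with
    | zero =>
      intro h
      convert sw12 using 2 <;> simp
    | succ j ih =>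
      intro h
      refine conj_swap_mem hc (ih (by omega)) ?_ ?_ <;>
        · simp only [Fin.ext_iff, Equiv.Perm.mul_apply, pr_val, Fin.val_mk]
          split_ifs <;> omega
  have sN3 : Equiv.swap (⟨n-3, by omega⟩ : Fin n) ⟨n-2, by omega⟩ ∈ G := by
    rw [Equiv.swap_comm]
    refine conj_swap_mem hRn sw12 ?_ ?_ <;>
      · simp only [Fin.ext_iff, pr_val, Fin.val_mk]
        split_ifs <;> omega
  -- all adjacent swaps
  have alls : ∀ v : ℕ, (h : v + 1 < n) → Equiv.swap (⟨v, by omega⟩ : Fin n) ⟨v+1, h⟩ ∈ G := by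
    intro v h
    have hv3 : v % 3 = 0 ∨ v % 3 = 1 ∨ v % 3 = 2 := by omega
    rcases hv3 with hv | hv | hv
    · have := s0' v hv (by omega)
      convert this using 2 <;> simp [Fin.ext_iff]
    · rcases eq_or_ne v (n-3) with rfl | hne
      · convert sN3 using 2 <;> simp [Fin.ext_iff] <;> omega
      · have := s1 (v/3) (by omega)
        convert this using 2 <;> simp [Fin.ext_iff] <;> omega
    · have := s2 v hv (by omega)
      convert this using 2 <;> simp [Fin.ext_iff]
  exact top_of_adjacent (by omega) alls


def presGroup {n : ℕ} {α : Type} (f : Fin n → α) : Subgroup (Perm (Fin n)) where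
  carrier := {g | ∀ x y, f (g x) = f (g y) ↔ f x = f y}
  one_mem' := by intro x y; simp
  mul_mem' := by
    intro g h hg hh x y
    simp only [Equiv.Perm.coe_mul, Function.comp_apply]
    exact (hg (h x) (h y)).trans (hh x y)
  inv_mem' := by
    intro g hg x y
    have := hg (g⁻¹ x) (g⁻¹ y)
    simpa using this.symm

lemma mem_presGroup {n : ℕ} {α : Type} {f : Fin n → α} {g : Perm (Fin n)} :
    g ∈ presGroup f ↔ ∀ x y, f (g x) = f (g y) ↔ f x = f y := Iff.rfl

lemma closure_ne_top_of_pres {n : ℕ} {α : Type} (f : Fin n → α)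
    (S : Set (Perm (Fin n))) (hS : ∀ g ∈ S, g ∈ presGroup f)
    {x y z : Fin n} (hxy : x ≠ y) (hf : f x = f y) (hfz : f x ≠ f z) :
    Subgroup.closure S ≠ ⊤ := by
  intro htop
  have hle : Subgroup.closure S ≤ presGroup f := (Subgroup.closure_le _).mpr hS
  have hmem : Equiv.swap y z ∈ presGroup f := hle (htop ▸ Subgroup.mem_top _)
  have hxz : x ≠ z := fun hc => hfz (hc ▸ rfl)
  have := (mem_presGroup.mp hmem x y).mpr hf
  rw [Equiv.swap_apply_of_ne_of_ne hxy hxz, Equiv.swap_apply_left] at this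
  exact hfz this

lemma nonN1 {n m : ℕ} (hn : n % 2 = 0) (hm : m % 2 = 0) (h2 : 2 < m) (h3 : m < n) :
    Subgroup.closure ({pr n n, pr n m, pr n 2} : Set (Perm (Fin n))) ≠ ⊤ := by
  have hn4 : 4 ≤ n := by omega
  have hpres : ∀ g ∈ ({pr n n, pr n m, pr n 2} : Set (Perm (Fin n))),
      g ∈ presGroup (fun x : Fin n => x.val / 2) := by
    rintro g (rfl | rfl | rfl) <;>
      · rw [mem_presGroup]
        intro x y
        have hx := x.isLt
        have hy := y.isLt
        simp only [pr_val]
        split_ifs <;> omega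
  exact closure_ne_top_of_pres _ _ hpres (x := ⟨0, by omega⟩) (y := ⟨1, by omega⟩)
    (z := ⟨2, by omega⟩) (by simp [Fin.ext_iff]) (by norm_num) (by norm_num)

lemma nonN3 {n m : ℕ} (hn : n % 3 = 0) (hm : m % 3 = 0) (h2 : 2 < m) (h3 : m < n) :
    Subgroup.closure ({pr n n, pr n m, pr n 2} : Set (Perm (Fin n))) ≠ ⊤ := by
  have hn6 : 6 ≤ n := by omega
  have hpres : ∀ g ∈ ({pr n n, pr n m, pr n 2} : Set (Perm (Fin n))),
      g ∈ presGroup (fun x : Fin n => x.val / 3) := by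
    rintro g (rfl | rfl | rfl) <;>
      · rw [mem_presGroup]
        intro x y
        have hx := x.isLt
        have hy := y.isLt
        simp only [pr_val]
        split_ifs <;> omega
  exact closure_ne_top_of_pres _ _ hpres (x := ⟨0, by omega⟩) (y := ⟨1, by omega⟩)
    (z := ⟨3, by omega⟩) (by simp [Fin.ext_iff]) (by norm_num) (by norm_num)

lemma nonN4 {n m : ℕ} (hn : n % 6 = 4) (hm : m = n - 3) (h2 : 2 < m) :
    Subgroup.closure ({pr n n, pr n m, pr n 2} : Set (Perm (Fin n))) ≠ ⊤ := by
  have hn10 : 10 ≤ n := by omega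
  have hpres : ∀ g ∈ ({pr n n, pr n m, pr n 2} : Set (Perm (Fin n))),
      g ∈ presGroup (fun x : Fin n => (x.val + 1) % 6 / 3) := by
    rintro g (rfl | rfl | rfl) <;>
      · rw [mem_presGroup]
        intro x y
        have hx := x.isLt
        have hy := y.isLt
        simp only [pr_val]
        split_ifs <;> omega
  exact closure_ne_top_of_pres _ _ hpres (x := ⟨0, by omega⟩) (y := ⟨1, by omega⟩)
    (z := ⟨2, by omega⟩) (by simp [Fin.ext_iff]) (by norm_num) (by norm_num)


lemma nonN2 {n m k : ℕ} (hk : n - m = k) (hk3 : 3 ≤ k) (h2 : 2 < m) (h3 : m < n)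
    (a b : ZMod k) (hab : a + b = ((m + 1 : ℕ) : ZMod k))
    (ha1 : a ≠ 1) (ha2 : a ≠ 2) (hb1 : b ≠ 1) (hb2 : b ≠ 2) :
    Subgroup.closure ({pr n n, pr n m, pr n 2} : Set (Perm (Fin n))) ≠ ⊤ := by
  haveI : NeZero k := ⟨by omega⟩
  have hnm : ((n : ℕ) : ZMod k) = (m : ZMod k) := by
    rw [show n = m + k by omega]
    push_cast [ZMod.natCast_self]
    ring
  have aux : ∀ p q : ZMod k, p + q = a + b → p = a → q = b := by
    intro p q h hp
    rw [hp] at h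
    exact add_left_cancel h
  have aux2 : ∀ p q : ZMod k, p + q = a + b → p = b → q = a := by
    intro p q h hp
    rw [hp, add_comm a b] at h
    exact add_left_cancel h
  have key : ∀ p q : ℕ, ((p : ZMod k) + (q : ZMod k) = a + b) →
      (((p : ZMod k) = a ∨ (p : ZMod k) = b) ↔
        ((q : ZMod k) = a ∨ (q : ZMod k) = b)) := by
    intro p q hpq
    have hpq' : ((q : ZMod k) + (p : ZMod k) = a + b) := by rw [add_comm]; exact hpq
    constructor
    · rintro (h | h)
      · exact Or.inr (aux _ _ hpq h)
      · exact Or.inl (aux2 _ _ hpq h)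
    · rintro (h | h)
      · exact Or.inr (aux _ _ hpq' h)
      · exact Or.inl (aux2 _ _ hpq' h)
  set f : Fin n → Bool := fun x =>
    decide ((((x.val + 1 : ℕ)) : ZMod k) = a ∨ (((x.val + 1 : ℕ)) : ZMod k) = b) with hfdef
  have hpres : ∀ g ∈ ({pr n n, pr n m, pr n 2} : Set (Perm (Fin n))), g ∈ presGroup f := by
    have fixgoal : ∀ g : Perm (Fin n), (∀ z : Fin n, f (g z) = f z) → g ∈ presGroup f := by
      intro g hg
      rw [mem_presGroup]
      intro x y
      rw [hg x, hg y]
    rintro g (rfl | rfl | rfl)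
    · -- pr n n
      apply fixgoal
      intro z
      have hzlt := z.isLt
      have hval : ((pr n n) z).val = n - 1 - z.val := by
        rw [pr_val]
        split_ifs <;> omega
      show decide _ = decide _
      rw [decide_eq_decide, hval]
      apply key
      rw [show n - 1 - z.val + 1 = n - z.val by omega, Nat.cast_sub (by omega : z.val ≤ n)]
      push_cast [hnm] at hab ⊢
      linear_combination -hab
    · -- pr n m
      apply fixgoal
      intro z
      by_cases hz : z.val < m
      · have hval : ((pr n m) z).val = m - 1 - z.val := by
          rw [pr_val]
          split_ifs <;> omega
        show decide _ = decide _
        rw [decide_eq_decide, hval]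
        apply key
        rw [show m - 1 - z.val + 1 = m - z.val by omega, Nat.cast_sub (by omega : z.val ≤ m)]
        push_cast at hab ⊢
        linear_combination -hab
      · have hval : ((pr n m) z).val = z.val := by
          rw [pr_val]
          split_ifs <;> omega
        show decide _ = decide _
        rw [hval]
    · -- pr n 2
      apply fixgoal
      intro z
      by_cases hz : z.val < 2
      · have hval : ((pr n 2) z).val = 1 - z.val := by
          rw [pr_val]
          split_ifs <;> omega
        show decide _ = decide _
        rw [decide_eq_decide, hval]
        have h01 : z.val = 0 ∨ z.val = 1 := by omega
        rcases h01 with h0 | h0 <;> rw [h0] <;> norm_num <;>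
          simp [eq_comm (b := a), eq_comm (b := b), ha1, ha2, hb1, hb2]
      · have hval : ((pr n 2) z).val = z.val := by
          rw [pr_val]
          split_ifs <;> omega
        show decide _ = decide _
        rw [hval]
  -- witnesses
  have hvlt := ZMod.val_lt a
  set p0 : ℕ := if a.val = 0 then k else a.val with hp0
  have hp0k : 1 ≤ p0 ∧ p0 ≤ k := by
    constructor <;> by_cases h : a.val = 0 <;> simp [hp0, h] <;> omega
  have hzlt : p0 - 1 < n := by omega
  have hcast : ((p0 - 1 + 1 : ℕ) : ZMod k) = a := by
    rw [show p0 - 1 + 1 = p0 by omega]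
    by_cases h : a.val = 0
    · rw [hp0]
      simp only [h, if_pos, ite_true]
      rw [ZMod.natCast_self]
      exact ((ZMod.val_eq_zero a).mp h).symm
    · rw [hp0]
      simp only [h, ite_false]
      exact ZMod.natCast_rightInverse a
  have f0 : f ⟨0, by omega⟩ = false := by
    show decide _ = false
    rw [decide_eq_false_iff_not]
    push_cast
    rintro (h | h)
    exacts [ha1 h.symm, hb1 h.symm]
  have f1 : f ⟨1, by omega⟩ = false := by
    show decide _ = false
    rw [decide_eq_false_iff_not]
    push_cast
    rintro (h | h)
    exacts [ha2 h.symm, hb2 h.symm]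
  have fz : f ⟨p0 - 1, hzlt⟩ = true := by
    show decide _ = true
    rw [decide_eq_true_eq]
    exact Or.inl hcast
  refine closure_ne_top_of_pres f _ hpres (x := ⟨0, by omega⟩) (y := ⟨1, by omega⟩)
    (z := ⟨p0 - 1, hzlt⟩) (by simp [Fin.ext_iff]) (by rw [f0, f1]) (by rw [f0, fz]; simp)


lemma nonN2_k3 {n m : ℕ} (hk : n - m = 3) (hm : m % 3 = 2) (h2 : 2 < m) (h3 : m < n) :
    Subgroup.closure ({pr n n, pr n m, pr n 2} : Set (Perm (Fin n))) ≠ ⊤ := by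
  refine nonN2 hk (by omega) h2 h3 0 0 ?_ (by decide) (by decide) (by decide) (by decide)
  rw [(ZMod.natCast_eq_zero_iff (m+1) 3).mpr (by omega)]
  decide

lemma nonN2_k4a {n m : ℕ} (hk : n - m = 4) (hm : m % 4 = 1) (h2 : 2 < m) (h3 : m < n) :
    Subgroup.closure ({pr n n, pr n m, pr n 2} : Set (Perm (Fin n))) ≠ ⊤ := by
  refine nonN2 hk (by omega) h2 h3 3 3 ?_ (by decide) (by decide) (by decide) (by decide)
  have h1 : ((m + 1 : ℕ) : ZMod 4) = ((4 * ((m+1)/4) + 2 : ℕ) : ZMod 4) := by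
    congr 1
    omega
  rw [h1]
  push_cast
  rw [show (4 : ZMod 4) = 0 by decide]
  ring_nf
  decide

lemma nonN2_k4b {n m : ℕ} (hk : n - m = 4) (hm : m % 4 = 3) (h2 : 2 < m) (h3 : m < n) :
    Subgroup.closure ({pr n n, pr n m, pr n 2} : Set (Perm (Fin n))) ≠ ⊤ := by
  refine nonN2 hk (by omega) h2 h3 0 0 ?_ (by decide) (by decide) (by decide) (by decide)
  rw [(ZMod.natCast_eq_zero_iff (m+1) 4).mpr (by omega)]
  decide

lemma nonN2_big {n m : ℕ} (hk : 5 ≤ n - m) (h2 : 2 < m) (h3 : m < n) :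
    Subgroup.closure ({pr n n, pr n m, pr n 2} : Set (Perm (Fin n))) ≠ ⊤ := by
  set k := n - m with hkdef
  haveI : NeZero k := ⟨by omega⟩
  -- find a avoiding {1, 2, m, m-1}
  set s : Finset (ZMod k) := {1, 2, (m : ZMod k), (m : ZMod k) - 1} with hs
  have hcard : s.card ≤ 4 := by
    refine le_trans (Finset.card_insert_le _ _) ?_
    refine Nat.succ_le_succ (le_trans (Finset.card_insert_le _ _) ?_)
    refine Nat.succ_le_succ (le_trans (Finset.card_insert_le _ _) ?_)
    simp
  have hex : ∃ a : ZMod k, a ∉ s := by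
    by_contra hall
    push_neg at hall
    have hsub : (Finset.univ : Finset (ZMod k)) ⊆ s := fun t _ => hall t
    have := Finset.card_le_card hsub
    rw [Finset.card_univ, ZMod.card] at this
    omega
  obtain ⟨a, ha⟩ := hex
  simp only [hs, Finset.mem_insert, Finset.mem_singleton, not_or] at ha
  obtain ⟨ha1, ha2, ham, ham1⟩ := ha
  refine nonN2 rfl (by omega) h2 h3 a (((m + 1 : ℕ) : ZMod k) - a) (by ring) ha1 ha2 ?_ ?_
  · intro hb
    apply ham
    have : ((m + 1 : ℕ) : ZMod k) = a + 1 := by rw [← hb]; ring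
    push_cast at this
    linear_combination -this
  · intro hb
    apply ham1
    have : ((m + 1 : ℕ) : ZMod k) = a + 2 := by rw [← hb]; ring
    push_cast at this
    linear_combination -this


theorem stmt14 (n m : ℕ) (hn : 4 ≤ n) (hm1 : 2 < m) (hm2 : m < n) :
    (n - 3 ≤ m →
      (Subgroup.closure ({pr n n, pr n m, pr n 2} : Set (Equiv.Perm (Fin n))) = ⊤ ↔
        (n % 2 = 0 ∧ m = n - 1) ∨
        (n % 2 = 1 ∧ (n % 3 = 0 ∨ n % 3 = 2) ∧ (m = n - 1 ∨ m = n - 2)) ∨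
        (n % 2 = 1 ∧ n % 3 = 1 ∧ (m = n - 1 ∨ m = n - 2 ∨ m = n - 3)))) ∧
    (7 ≤ n → m ≤ n - 4 →
      Subgroup.closure ({pr n n, pr n m, pr n 2} : Set (Equiv.Perm (Fin n))) ≠ ⊤) := by
  constructor
  · intro hm3
    constructor
    · intro htop
      by_contra hrhs
      have hcases : (m = n-2 ∧ n % 2 = 0) ∨ (m = n-3 ∧ n % 3 = 0) ∨
          (m = n-3 ∧ n % 3 = 2) ∨ (m = n-3 ∧ n % 6 = 4) := by omega
      rcases hcases with ⟨hm', hp⟩ | ⟨hm', hp⟩ | ⟨hm', hp⟩ | ⟨hm', hp⟩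
      · exact nonN1 hp (by omega) hm1 hm2 htop
      · exact nonN3 hp (by omega) hm1 hm2 htop
      · exact nonN2_k3 (by omega) (by omega) hm1 hm2 htop
      · exact nonN4 hp hm' hm1 htop
    · intro hrhs
      have hcases : m = n-1 ∨ (n % 2 = 1 ∧ m = n-2) ∨ (n % 6 = 1 ∧ m = n-3) := by omega
      rcases hcases with hm' | ⟨hp, hm'⟩ | ⟨hp, hm'⟩
      · subst hm'; exact gen1 hn
      · subst hm'; exact gen2 (by omega) hp
      · subst hm'; exact gen3 (by omega) hp
  · intro h7 hm4
    have hcases : 5 ≤ n - m ∨ (n-m = 4 ∧ m % 2 = 0 ∧ n % 2 = 0) ∨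
        (n-m = 4 ∧ m % 4 = 1) ∨ (n-m = 4 ∧ m % 4 = 3) := by omega
    rcases hcases with h | ⟨h1, h2', h3'⟩ | ⟨h1, h2'⟩ | ⟨h1, h2'⟩
    · exact nonN2_big h hm1 hm2
    · exact nonN1 h3' h2' hm1 hm2
    · exact nonN2_k4a h1 h2' hm1 hm2
    · exact nonN2_k4b h1 h2' hm1 hm2
end
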